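/- Let μ ≥ 0, m ≥ 0, φ_m(t) = t^{m+1}/(m+1), and ρ(t) = t^{(μ+1)/2} K_{(μ−1)/(2(m+1))}(φ_m(t)). Then ρ'(t)/(t^m ρ(t)) → −1 as t → ∞. -/

import Mathlib

noncomputable def besselK (η y : ℝ) : ℝ :=
  ∫ ζ in Set.Ioi (0:ℝ), Real.exp (-y * Real.cosh ζ) * Real.cosh (η * ζ)

noncomputable def phim (m t : ℝ) : ℝ := t ^ (m + 1) / (m + 1)

noncomputable def rho (μ m t : ℝ) : ℝ :=
  t ^ ((μ + 1) / 2) * besselK ((μ - 1) / (2 * (m + 1))) (phim m t)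

open Real MeasureTheory Set Filter Topology

noncomputable def besselL (η y : ℝ) : ℝ :=
  ∫ ζ in Set.Ioi (0:ℝ), Real.cosh ζ * (Real.exp (-y * Real.cosh ζ) * Real.cosh (η * ζ))

lemma cosh_le_exp_abs' (x : ℝ) : Real.cosh x ≤ Real.exp |x| := by
  rw [← Real.cosh_abs, Real.cosh_eq]
  nlinarith [Real.exp_le_exp.mpr (neg_abs_le x), Real.exp_pos (-|x|), Real.exp_pos |x|, abs_nonneg x, Real.exp_le_exp.mpr (neg_le_self (abs_nonneg x))]

lemma sq_div_le_cosh (x : ℝ) (hx : 0 ≤ x) : x^2/8 ≤ Real.cosh x := by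
  have h1 : Real.exp (x/2) ≥ x/2 + 1 := by linarith [Real.add_one_le_exp (x/2)]
  have h2 : Real.exp x = Real.exp (x/2) * Real.exp (x/2) := by rw [← Real.exp_add]; ring_nf
  have : Real.exp x ≥ x^2/4 := by nlinarith [Real.exp_pos (x/2)]
  rw [Real.cosh_eq]
  nlinarith [Real.exp_pos (-x)]

lemma integrable_f (ν : ℝ) (n : ℕ) {y : ℝ} (hy : 0 < y) :
    IntegrableOn (fun ζ => Real.cosh ζ ^ n * (Real.exp (-y * Real.cosh ζ) * Real.cosh (ν * ζ)))
      (Set.Ioi (0:ℝ)) := by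
  apply integrable_of_isBigO_exp_neg (b := 1) one_pos
  · fun_prop
  · rw [Asymptotics.isBigO_iff]
    refine ⟨1, ?_⟩
    filter_upwards [eventually_ge_atTop (0:ℝ), eventually_ge_atTop (8*(n + |ν| + 1)/y)] with ζ h0 h8
    have hc1 : (1:ℝ) ≤ Real.cosh ζ := Real.one_le_cosh ζ
    have hcexp : Real.cosh ζ ≤ Real.exp ζ := by
      calc Real.cosh ζ ≤ Real.exp |ζ| := cosh_le_exp_abs' ζ
      _ = Real.exp ζ := by rw [abs_of_nonneg h0]
    have hν : Real.cosh (ν * ζ) ≤ Real.exp (|ν| * ζ) := by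
      calc Real.cosh (ν * ζ) ≤ Real.exp |ν * ζ| := cosh_le_exp_abs' _
      _ = Real.exp (|ν| * ζ) := by rw [abs_mul, abs_of_nonneg h0]
    have key : (n + |ν| + 1) * ζ ≤ y * Real.cosh ζ := by
      have h2 := sq_div_le_cosh ζ h0
      have hcn : 0 ≤ (n:ℝ) + |ν| + 1 := by positivity
      rcases le_or_gt ζ 0 with h | h
      · have : ζ = 0 := le_antisymm h h0
        simp [this]
        positivity
      · have : 8*((n:ℝ) + |ν| + 1) ≤ y * ζ := by
          rw [div_le_iff₀ hy] at h8
          nlinarith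
        nlinarith
    have hpow : Real.cosh ζ ^ n ≤ Real.exp ((n:ℝ) * ζ) := by
      calc Real.cosh ζ ^ n ≤ Real.exp ζ ^ n := pow_le_pow_left₀ (by positivity) hcexp n
      _ = Real.exp ((n:ℝ) * ζ) := by rw [← Real.exp_nat_mul]
    have hbig : Real.cosh ζ ^ n * (Real.exp (-y * Real.cosh ζ) * Real.cosh (ν * ζ))
        ≤ Real.exp ((n:ℝ)*ζ) * (Real.exp (-y * Real.cosh ζ) * Real.exp (|ν| * ζ)) := by
      have h3 : 0 < Real.exp (-y * Real.cosh ζ) := Real.exp_pos _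
      have := Real.cosh_pos (x := ν * ζ)
      have h5 : (0:ℝ) ≤ Real.cosh ζ ^ n := by positivity
      gcongr
    rw [Real.norm_eq_abs, Real.norm_eq_abs, abs_of_nonneg (by positivity), abs_of_nonneg (by positivity), one_mul]
    calc Real.cosh ζ ^ n * (Real.exp (-y * Real.cosh ζ) * Real.cosh (ν * ζ))
        ≤ Real.exp ((n:ℝ)*ζ) * (Real.exp (-y * Real.cosh ζ) * Real.exp (|ν| * ζ)) := hbig
      _ = Real.exp ((n:ℝ)*ζ + ((|ν|)*ζ + -y * Real.cosh ζ)) := by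
          rw [← Real.exp_add, ← Real.exp_add]; congr 1; ring
      _ ≤ Real.exp (-1 * ζ) := by
          apply Real.exp_le_exp.mpr; nlinarith [key]

lemma integrable0 (ν : ℝ) {y : ℝ} (hy : 0 < y) :
    IntegrableOn (fun ζ => Real.exp (-y * Real.cosh ζ) * Real.cosh (ν * ζ)) (Set.Ioi (0:ℝ)) := by
  simpa using integrable_f ν 0 hy

lemma integrable1 (ν : ℝ) {y : ℝ} (hy : 0 < y) :
    IntegrableOn (fun ζ => Real.cosh ζ * (Real.exp (-y * Real.cosh ζ) * Real.cosh (ν * ζ)))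
      (Set.Ioi (0:ℝ)) := by
  simpa [pow_one] using integrable_f ν 1 hy

lemma besselK_pos (ν : ℝ) {y : ℝ} (hy : 0 < y) : 0 < besselK ν y := by
  rw [besselK]
  apply setIntegral_pos_iff_support_of_nonneg_ae ?_ (integrable0 ν hy) |>.mpr
  · have : (Function.support fun ζ => Real.exp (-y * Real.cosh ζ) * Real.cosh (ν * ζ)) = Set.univ := by
      ext ζ; simp [Function.mem_support]
      positivity
    rw [this]
    simp [Set.univ_inter]
  · filter_upwards with ζ
    positivity

lemma hasDerivAt_besselK (ν : ℝ) {y : ℝ} (hy : 0 < y) :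
    HasDerivAt (besselK ν) (-(besselL ν y)) y := by
  have h2 : 0 < y/2 := by linarith
  have key := hasDerivAt_integral_of_dominated_loc_of_deriv_le
    (μ := volume.restrict (Set.Ioi (0:ℝ)))
    (F := fun x ζ => Real.exp (-x * Real.cosh ζ) * Real.cosh (ν * ζ))
    (F' := fun x ζ => -(Real.cosh ζ * (Real.exp (-x * Real.cosh ζ) * Real.cosh (ν * ζ))))
    (x₀ := y)
    (bound := fun ζ => Real.cosh ζ * (Real.exp (-(y/2) * Real.cosh ζ) * Real.cosh (ν * ζ)))
    (s := Metric.ball y (y/2)) (Metric.ball_mem_nhds y h2)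
    ?_ (integrable0 ν hy) ?_ ?_ (integrable1 ν h2) ?_
  · have := key.2
    show HasDerivAt (fun x => ∫ ζ in Set.Ioi (0:ℝ), Real.exp (-x * Real.cosh ζ) * Real.cosh (ν * ζ))
      (-(∫ ζ in Set.Ioi (0:ℝ), Real.cosh ζ * (Real.exp (-y * Real.cosh ζ) * Real.cosh (ν * ζ)))) y
    rw [← integral_neg]
    exact this
  · filter_upwards with x
    apply Continuous.aestronglyMeasurable
    fun_prop
  · apply Continuous.aestronglyMeasurable
    fun_prop
  · filter_upwards [ae_restrict_mem measurableSet_Ioi] with ζ hζ x hx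
    rw [Metric.mem_ball, Real.dist_eq] at hx
    have hx2 : y/2 ≤ x := by cases abs_lt.mp hx; linarith
    have h1 : Real.exp (-x * Real.cosh ζ) ≤ Real.exp (-(y/2) * Real.cosh ζ) := by
      apply Real.exp_le_exp.mpr
      have := Real.one_le_cosh ζ
      nlinarith
    rw [norm_neg, Real.norm_eq_abs, abs_of_nonneg (by positivity)]
    have hcν := (Real.cosh_pos (x := ν * ζ)).le
    have hcζ := (Real.cosh_pos (x := ζ)).le
    gcongr
  · filter_upwards with ζ x _
    have h : HasDerivAt (fun x : ℝ => -x * Real.cosh ζ) (-Real.cosh ζ) x := by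
      have := ((hasDerivAt_id x).mul_const (Real.cosh ζ)).neg
      simpa [neg_mul, Pi.neg_def] using this
    have := (h.exp).mul_const (Real.cosh (ν * ζ))
    exact this.congr_deriv (by ring)

lemma ratio_tendsto (ν : ℝ) :
    Tendsto (fun y => besselL ν y / besselK ν y) atTop (𝓝 1) := by
  rw [Metric.tendsto_atTop]
  intro ε hε
  -- choose d with cosh d - 1 < ε/4
  have hc : ContinuousAt Real.cosh 0 := Real.continuous_cosh.continuousAt
  rw [Metric.continuousAt_iff] at hc
  obtain ⟨δ, hδ0, hδ⟩ := hc (ε/4) (by positivity)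
  set d : ℝ := δ/2 with hd_def
  have hd0 : 0 < d := by positivity
  have hcd : Real.cosh d - 1 < ε/4 := by
    have := hδ (x := d) (by rw [Real.dist_eq, sub_zero, abs_of_nonneg hd0.le]; rw [hd_def]; linarith)
    rw [Real.dist_eq, Real.cosh_zero] at this
    have h1 := Real.one_le_cosh d
    rw [abs_of_nonneg (by linarith)] at this
    linarith
  have hd1 : (1:ℝ) ≤ Real.cosh d := Real.one_le_cosh d
  set C : ℝ := besselL ν 1 with hC_def
  have hC0 : 0 ≤ C := by
    rw [hC_def, besselL]
    apply setIntegral_nonneg measurableSet_Ioi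
    intro ζ _
    positivity
  set gap : ℝ := Real.cosh d - Real.cosh (d/2) with hgap_def
  have hgap : 0 < gap := by
    have h : Real.cosh (d/2) < Real.cosh d := by
      rw [Real.cosh_lt_cosh, abs_of_nonneg (show (0:ℝ) ≤ d/2 by positivity), abs_of_nonneg hd0.le]
      linarith
    exact sub_pos.mpr h
  -- tendsto for tail
  have hT : Tendsto (fun y : ℝ => C * Real.exp (Real.cosh d) * Real.exp (-gap * y)) atTop (𝓝 0) := by
    have h1 : Tendsto (fun y : ℝ => -gap * y) atTop atBot :=
      tendsto_id.const_mul_atTop_of_neg (by linarith)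
    have h2 := Real.tendsto_exp_atBot.comp h1
    have := h2.const_mul (C * Real.exp (Real.cosh d))
    simpa using this
  obtain ⟨Y, hY⟩ := eventually_atTop.mp (hT.eventually (gt_mem_nhds (show (0:ℝ) < ε/4 * (d/2) by positivity)))
  refine ⟨max Y 1, fun y hy => ?_⟩
  have hy1 : (1:ℝ) ≤ y := le_trans (le_max_right Y 1) hy
  have hyY : Y ≤ y := le_trans (le_max_left Y 1) hy
  have hy0 : (0:ℝ) < y := by linarith
  have hK : 0 < besselK ν y := besselK_pos ν hy0
  set X : ℝ → ℝ := fun ζ => Real.exp (-y * Real.cosh ζ) * Real.cosh (ν * ζ) with hX_def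
  set g : ℝ → ℝ := fun ζ => Real.cosh ζ * X ζ - X ζ with hg_def
  have hX_nonneg : ∀ ζ, 0 ≤ X ζ := fun ζ => by rw [hX_def]; positivity
  have hg_nonneg : ∀ ζ, 0 ≤ g ζ := fun ζ => by
    have := Real.one_le_cosh ζ
    have := hX_nonneg ζ
    simp only [hg_def]
    nlinarith
  have hgint : IntegrableOn g (Set.Ioi (0:ℝ)) := (integrable1 ν hy0).sub (integrable0 ν hy0)
  -- step 1: L - K = ∫ g
  have h1 : besselL ν y - besselK ν y = ∫ ζ in Set.Ioi (0:ℝ), g ζ := by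
    rw [besselL, besselK, ← integral_sub (integrable1 ν hy0) (integrable0 ν hy0)]
  -- step 2: split
  have hsplit : ∫ ζ in Set.Ioi (0:ℝ), g ζ
      = (∫ ζ in Set.Ioc (0:ℝ) d, g ζ) + ∫ ζ in Set.Ioi d, g ζ := by
    rw [← Set.Ioc_union_Ioi_eq_Ioi hd0.le]
    exact setIntegral_union Set.Ioc_disjoint_Ioi_same measurableSet_Ioi
      (hgint.mono_set Set.Ioc_subset_Ioi_self)
      (hgint.mono_set (Set.Ioi_subset_Ioi hd0.le))
  -- step 3: I1 bound
  have hI1 : (∫ ζ in Set.Ioc (0:ℝ) d, g ζ) ≤ (Real.cosh d - 1) * besselK ν y := by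
    have step1 : (∫ ζ in Set.Ioc (0:ℝ) d, g ζ)
        ≤ ∫ ζ in Set.Ioc (0:ℝ) d, (Real.cosh d - 1) * X ζ := by
      apply setIntegral_mono_on (hgint.mono_set Set.Ioc_subset_Ioi_self)
        (((integrable0 ν hy0).mono_set Set.Ioc_subset_Ioi_self).const_mul _)
        measurableSet_Ioc
      intro ζ hζ
      have hcc : Real.cosh ζ ≤ Real.cosh d := by
        rw [Real.cosh_le_cosh, abs_of_nonneg hζ.1.le, abs_of_nonneg hd0.le]
        exact hζ.2
      have hXζ : (0:ℝ) ≤ X ζ := hX_nonneg ζ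
      have hprod : 0 ≤ (Real.cosh d - Real.cosh ζ) * X ζ := mul_nonneg (by linarith) hXζ
      simp only [hg_def, hX_def] at *
      nlinarith
    rw [integral_const_mul] at step1
    refine step1.trans ?_
    apply mul_le_mul_of_nonneg_left _ (by linarith)
    rw [besselK]
    exact setIntegral_mono_set (integrable0 ν hy0)
      (Filter.Eventually.of_forall fun ζ => hX_nonneg ζ)
      (HasSubset.Subset.eventuallyLE Set.Ioc_subset_Ioi_self)
  -- step 4: I2 bound
  have hI2 : (∫ ζ in Set.Ioi d, g ζ)
      ≤ Real.exp (Real.cosh d) * Real.exp (-y * Real.cosh d) * C := by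
    have step1 : (∫ ζ in Set.Ioi d, g ζ)
        ≤ ∫ ζ in Set.Ioi d, (Real.exp (Real.cosh d) * Real.exp (-y * Real.cosh d)) *
            (Real.cosh ζ * (Real.exp (-1 * Real.cosh ζ) * Real.cosh (ν * ζ))) := by
      apply setIntegral_mono_on (hgint.mono_set (Set.Ioi_subset_Ioi hd0.le))
        (((integrable1 ν one_pos).mono_set (Set.Ioi_subset_Ioi hd0.le)).const_mul _)
        measurableSet_Ioi
      intro ζ hζ
      rw [Set.mem_Ioi] at hζ
      have hζ0 : 0 < ζ := lt_trans hd0 hζ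
      have hcc : Real.cosh d ≤ Real.cosh ζ := by
        rw [Real.cosh_le_cosh, abs_of_nonneg hd0.le, abs_of_nonneg hζ0.le]
        exact hζ.le
      -- g ζ = (cosh ζ - 1) X ζ ≤ cosh ζ * X ζ
      have hb1 : g ζ ≤ Real.cosh ζ * X ζ := by
        have := hX_nonneg ζ
        simp only [hg_def]
        nlinarith
      refine hb1.trans ?_
      -- cosh ζ * X ζ = cosh ζ * exp(-y cosh ζ) cosh(νζ)
      -- ≤ exp(cosh d - y cosh d) * cosh ζ * exp(-cosh ζ) cosh(νζ)
      rw [hX_def]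
      have key : Real.exp (-y * Real.cosh ζ)
          ≤ Real.exp (Real.cosh d) * Real.exp (-y * Real.cosh d) * Real.exp (-1 * Real.cosh ζ) := by
        rw [← Real.exp_add, ← Real.exp_add, Real.exp_le_exp]
        have h1cosh : 1 ≤ Real.cosh ζ := Real.one_le_cosh ζ
        nlinarith
      have hcν := (Real.cosh_pos (x := ν * ζ)).le
      have hcζ := (Real.cosh_pos (x := ζ)).le
      calc Real.cosh ζ * (Real.exp (-y * Real.cosh ζ) * Real.cosh (ν * ζ))
          ≤ Real.cosh ζ * ((Real.exp (Real.cosh d) * Real.exp (-y * Real.cosh d) *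
              Real.exp (-1 * Real.cosh ζ)) * Real.cosh (ν * ζ)) := by gcongr
        _ = Real.exp (Real.cosh d) * Real.exp (-y * Real.cosh d) *
              (Real.cosh ζ * (Real.exp (-1 * Real.cosh ζ) * Real.cosh (ν * ζ))) := by ring
    rw [integral_const_mul] at step1
    refine step1.trans ?_
    apply mul_le_mul_of_nonneg_left _ (by positivity)
    rw [hC_def, besselL]
    exact setIntegral_mono_set (integrable1 ν one_pos)
      (Filter.Eventually.of_forall fun ζ => by positivity)
      (HasSubset.Subset.eventuallyLE (Set.Ioi_subset_Ioi hd0.le))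
  -- step 5: K lower bound
  have hKlow : (d/2) * Real.exp (-y * Real.cosh (d/2)) ≤ besselK ν y := by
    have step1 : (∫ ζ in Set.Ioc (0:ℝ) (d/2), Real.exp (-y * Real.cosh (d/2)))
        ≤ ∫ ζ in Set.Ioc (0:ℝ) (d/2), X ζ := by
      apply setIntegral_mono_on (integrableOn_const (by simp [Real.volume_Ioc]))
        ((integrable0 ν hy0).mono_set Set.Ioc_subset_Ioi_self) measurableSet_Ioc
      intro ζ hζ
      have hcc : Real.cosh ζ ≤ Real.cosh (d/2) := by
        rw [Real.cosh_le_cosh, abs_of_nonneg hζ.1.le, abs_of_nonneg (by positivity)]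
        exact hζ.2
      have h1 : Real.exp (-y * Real.cosh (d/2)) ≤ Real.exp (-y * Real.cosh ζ) := by
        rw [Real.exp_le_exp]; nlinarith
      have h2 : 1 ≤ Real.cosh (ν * ζ) := Real.one_le_cosh _
      calc Real.exp (-y * Real.cosh (d/2)) ≤ Real.exp (-y * Real.cosh ζ) := h1
        _ ≤ Real.exp (-y * Real.cosh ζ) * Real.cosh (ν * ζ) := le_mul_of_one_le_right (by positivity) h2
    rw [setIntegral_const] at step1
    have hvol : (volume (Set.Ioc (0:ℝ) (d/2))).toReal = d/2 := by
      rw [Real.volume_Ioc, ENNReal.toReal_ofReal (by linarith)]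
      ring_nf
    rw [measureReal_def, hvol, smul_eq_mul] at step1
    refine step1.trans ?_
    rw [besselK]
    exact setIntegral_mono_set (integrable0 ν hy0)
      (Filter.Eventually.of_forall fun ζ => hX_nonneg ζ)
      (HasSubset.Subset.eventuallyLE Set.Ioc_subset_Ioi_self)
  -- step 6: combine
  have htail : Real.exp (Real.cosh d) * Real.exp (-y * Real.cosh d) * C ≤ (ε/4) * besselK ν y := by
    have hYy := hY y hyY
    -- C * exp(cosh d) * exp(-gap*y) < ε/4 * (d/2)
    have hsplit_exp : Real.exp (-y * Real.cosh d)
        = Real.exp (-gap * y) * Real.exp (-y * Real.cosh (d/2)) := by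
      rw [← Real.exp_add]
      congr 1
      simp only [hgap_def]
      ring
    rw [hsplit_exp]
    have e1 : Real.exp (Real.cosh d) * (Real.exp (-gap * y) * Real.exp (-y * Real.cosh (d/2))) * C
        = (C * Real.exp (Real.cosh d) * Real.exp (-gap * y)) * Real.exp (-y * Real.cosh (d/2)) := by
      ring
    rw [e1]
    calc (C * Real.exp (Real.cosh d) * Real.exp (-gap * y)) * Real.exp (-y * Real.cosh (d/2))
        ≤ (ε/4 * (d/2)) * Real.exp (-y * Real.cosh (d/2)) := by
          apply mul_le_mul_of_nonneg_right hYy.le (Real.exp_pos _).le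
      _ = (ε/4) * ((d/2) * Real.exp (-y * Real.cosh (d/2))) := by ring
      _ ≤ (ε/4) * besselK ν y := by
          apply mul_le_mul_of_nonneg_left hKlow (by positivity)
  have hLK : besselL ν y - besselK ν y < (ε/2) * besselK ν y := by
    rw [h1, hsplit]
    have : (Real.cosh d - 1) * besselK ν y + (ε/4) * besselK ν y < (ε/2) * besselK ν y := by
      nlinarith
    calc (∫ ζ in Set.Ioc (0:ℝ) d, g ζ) + ∫ ζ in Set.Ioi d, g ζ
        ≤ (Real.cosh d - 1) * besselK ν y + Real.exp (Real.cosh d) * Real.exp (-y * Real.cosh d) * C := by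
          exact add_le_add hI1 hI2
      _ ≤ (Real.cosh d - 1) * besselK ν y + (ε/4) * besselK ν y := by linarith
      _ < (ε/2) * besselK ν y := this
  have hLK0 : 0 ≤ besselL ν y - besselK ν y := by
    rw [h1]
    exact setIntegral_nonneg measurableSet_Ioi fun ζ _ => hg_nonneg ζ
  rw [Real.dist_eq]
  have heq : besselL ν y / besselK ν y - 1 = (besselL ν y - besselK ν y) / besselK ν y := by
    field_simp
  rw [heq, abs_of_nonneg (by positivity)]
  rw [div_lt_iff₀ hK]
  calc besselL ν y - besselK ν y < (ε/2) * besselK ν y := hLK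
    _ ≤ ε * besselK ν y := by nlinarith

theorem stmt7 (μ m : ℝ) (hμ : 0 ≤ μ) (hm : 0 ≤ m) :
    Filter.Tendsto (fun t : ℝ => deriv (rho μ m) t / (t ^ m * rho μ m t))
      Filter.atTop (nhds (-1)) := by
  set ν : ℝ := (μ - 1) / (2 * (m + 1)) with hν_def
  set a : ℝ := (μ + 1) / 2 with ha_def
  have hm1 : (0:ℝ) < m + 1 := by linarith
  -- limit of the simplified expression
  have T2 : Tendsto (phim m) atTop atTop := by
    have := (tendsto_rpow_atTop hm1).atTop_div_const hm1
    exact this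
  have T1 : Tendsto (fun t : ℝ => a / t ^ (m+1)) atTop (𝓝 0) :=
    Tendsto.div_atTop tendsto_const_nhds (tendsto_rpow_atTop hm1)
  have T3 : Tendsto (fun t : ℝ => besselL ν (phim m t) / besselK ν (phim m t)) atTop (𝓝 1) :=
    (ratio_tendsto ν).comp T2
  have Tmain : Tendsto (fun t : ℝ => a / t ^ (m+1) - besselL ν (phim m t) / besselK ν (phim m t))
      atTop (𝓝 (-1)) := by
    have := T1.sub T3
    simpa using this
  refine Tendsto.congr' ?_ Tmain
  filter_upwards [eventually_gt_atTop (0:ℝ)] with t ht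
  -- compute deriv rho
  have hφpos : 0 < phim m t := by
    rw [phim]
    positivity
  have hφ : HasDerivAt (phim m) (t ^ m) t := by
    have h := Real.hasDerivAt_rpow_const (x := t) (p := m+1) (Or.inl ht.ne')
    have h2 := h.div_const (m+1)
    have he : (m + 1) * t ^ (m + 1 - 1) / (m + 1) = t ^ m := by
      field_simp
      ring_nf
    rw [he] at h2
    exact h2
  have hK := (hasDerivAt_besselK ν hφpos).comp t hφ
  have hpow : HasDerivAt (fun t : ℝ => t ^ a) (a * t ^ (a-1)) t :=
    Real.hasDerivAt_rpow_const (Or.inl ht.ne')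
  have hρ : HasDerivAt (rho μ m)
      (a * t ^ (a-1) * besselK ν (phim m t) + t ^ a * (-(besselL ν (phim m t)) * t ^ m)) t :=
    hpow.mul hK
  rw [hρ.deriv]
  -- algebra
  set k := besselK ν (phim m t) with hk_def
  set l := besselL ν (phim m t) with hl_def
  have hkpos : 0 < k := besselK_pos ν hφpos
  have hk : k ≠ 0 := hkpos.ne'
  have ht0 : t ≠ 0 := ht.ne'
  have htm : t ^ m ≠ 0 := (Real.rpow_pos_of_pos ht m).ne'
  have hta : t ^ a ≠ 0 := (Real.rpow_pos_of_pos ht a).ne'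
  have e1 : t ^ (a-1) = t ^ a / t := by
    rw [Real.rpow_sub ht, Real.rpow_one]
  have e2 : t ^ (m+1) = t ^ m * t := by
    rw [Real.rpow_add ht, Real.rpow_one]
  show a / t ^ (m + 1) - l / k
    = (a * t ^ (a-1) * k + t ^ a * (-l * t ^ m)) / (t ^ m * (t ^ a * k))
  rw [e1, e2]
  field_simp
  ring
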